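/- Let σ_b² > 0, P_a > 0, 0 ≤ P_min < P_max, and p_j ∈ (0,1] be reals. Then the function g(R) = R·(1 − p_j·(P_max − P_a/(2^R − 1) + σ_b²)/(P_max − P_min)) is strictly convex on the interval (0, ∞). -/

import Mathlib

open Real Set Filter

private lemma aux_exp_hasDerivAt (k x : ℝ) :
    HasDerivAt (fun y : ℝ => Real.exp (k * y)) (k * Real.exp (k * x)) x := by
  have h := (Real.hasDerivAt_exp (k * x)).comp x ((hasDerivAt_id x).const_mul k)
  exact h.congr_deriv (by ring)

private lemma aux_phi_pos {t : ℝ} (ht : 0 < t) :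
    0 < (t - 2) * Real.exp t + t + 2 := by
  set φ : ℝ → ℝ := fun s => (s - 2) * Real.exp s + s + 2 with hφ
  have hderiv : ∀ s : ℝ, HasDerivAt φ ((s - 1) * Real.exp s + 1) s := by
    intro s
    have h1 : HasDerivAt (fun u : ℝ => (u - 2) * Real.exp u)
        (1 * Real.exp s + (s - 2) * Real.exp s) s :=
      ((hasDerivAt_id s).sub_const 2).mul (Real.hasDerivAt_exp s)
    have h2 : HasDerivAt φ (1 * Real.exp s + (s - 2) * Real.exp s + 1) s := by
      have e : φ = fun u => (u - 2) * Real.exp u + (id u + 2) := by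
        funext u; simp only [hφ, id]; ring
      rw [e]; exact h1.add ((hasDerivAt_id s).add_const 2)
    have heq : (s - 1) * Real.exp s + 1 = 1 * Real.exp s + (s - 2) * Real.exp s + 1 := by ring
    rw [heq]; exact h2
  have hpos : ∀ s : ℝ, 0 < s → 0 < (s - 1) * Real.exp s + 1 := by
    intro s hs
    rcases le_or_gt 1 s with h | h
    · have : 0 ≤ (s - 1) * Real.exp s :=
        mul_nonneg (by linarith) (Real.exp_pos s).le
      linarith
    · have h1 : 1 - s < Real.exp (-s) := by
        have := Real.add_one_lt_exp (x := -s) (by linarith)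
        linarith
      have h2 : (1 - s) * Real.exp s < 1 := by
        have he : Real.exp (-s) * Real.exp s = 1 := by
          rw [← Real.exp_add]; simp
        calc (1 - s) * Real.exp s < Real.exp (-s) * Real.exp s := by
              exact mul_lt_mul_of_pos_right h1 (Real.exp_pos s)
          _ = 1 := he
      nlinarith
  have hmono : StrictMonoOn φ (Set.Ici 0) := by
    apply strictMonoOn_of_deriv_pos (convex_Ici 0)
    · exact (((continuous_id.sub continuous_const).mul Real.continuous_exp).add
        continuous_id).add continuous_const |>.continuousOn
    · intro s hs
      rw [interior_Ici] at hs
      rw [(hderiv s).deriv]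
      exact hpos s hs
  have h0 : φ 0 = 0 := by simp [hφ]
  have := hmono (Set.self_mem_Ici) (Set.mem_Ici.mpr ht.le) ht
  rw [h0] at this
  simpa [hφ] using this

private lemma aux_F1 (A B k x : ℝ) (hne : Real.exp (k * x) - 1 ≠ 0) :
    HasDerivAt (fun y : ℝ => A * y + B * (y / (Real.exp (k * y) - 1)))
      (A + B * ((Real.exp (k * x) - 1 - x * (k * Real.exp (k * x))) /
        (Real.exp (k * x) - 1) ^ 2)) x := by
  have hq : HasDerivAt (fun y : ℝ => y / (Real.exp (k * y) - 1))
      ((1 * (Real.exp (k * x) - 1) - x * (k * Real.exp (k * x))) /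
        (Real.exp (k * x) - 1) ^ 2) x :=
    (hasDerivAt_id x).div ((aux_exp_hasDerivAt k x).sub_const 1) hne
  have h := ((hasDerivAt_id x).const_mul A).add (hq.const_mul B)
  exact h.congr_deriv (by ring)

private lemma aux_F2 (A B k x : ℝ) (hne : Real.exp (k * x) - 1 ≠ 0) :
    HasDerivAt (fun y : ℝ => A + B * ((Real.exp (k * y) - 1 - y * (k * Real.exp (k * y))) /
        (Real.exp (k * y) - 1) ^ 2))
      (B * (k * Real.exp (k * x) *
        ((k * x - 2) * Real.exp (k * x) + k * x + 2) / (Real.exp (k * x) - 1) ^ 3)) x := by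
  have hN : HasDerivAt (fun y : ℝ => Real.exp (k * y) - 1 - y * (k * Real.exp (k * y)))
      (k * Real.exp (k * x) - (1 * (k * Real.exp (k * x)) +
        x * (k * (k * Real.exp (k * x))))) x :=
    ((aux_exp_hasDerivAt k x).sub_const 1).sub
      ((hasDerivAt_id x).mul ((aux_exp_hasDerivAt k x).const_mul k))
  have hD : HasDerivAt (fun y : ℝ => (Real.exp (k * y) - 1) ^ 2)
      (2 * (Real.exp (k * x) - 1) ^ 1 * (k * Real.exp (k * x))) x :=
    ((aux_exp_hasDerivAt k x).sub_const 1).pow 2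
  have hDne : (Real.exp (k * x) - 1) ^ 2 ≠ 0 := pow_ne_zero 2 hne
  have h := ((hN.div hD hDne).const_mul B).const_add A
  exact h.congr_deriv (by field_simp; ring)

theorem covert_throughput_strictly_convex
    (σb Pa Pmin Pmax pj : ℝ)
    (hσb : 0 < σb) (hPa : 0 < Pa) (hPmin : 0 ≤ Pmin) (hlt : Pmin < Pmax)
    (hpj0 : 0 < pj) (hpj1 : pj ≤ 1) :
    StrictConvexOn ℝ (Set.Ioi (0 : ℝ))
      (fun R : ℝ =>
        R * (1 - pj * (Pmax - Pa / ((2 : ℝ) ^ R - 1) + σb) / (Pmax - Pmin))) := by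
  set k : ℝ := Real.log 2 with hkdef
  have hk : 0 < k := Real.log_pos one_lt_two
  have hd : 0 < Pmax - Pmin := sub_pos.2 hlt
  set A : ℝ := 1 - pj * (Pmax + σb) / (Pmax - Pmin) with hAdef
  set B : ℝ := pj * Pa / (Pmax - Pmin) with hBdef
  have hB : 0 < B := by positivity
  set F : ℝ → ℝ := fun y => A * y + B * (y / (Real.exp (k * y) - 1)) with hFdef
  set F1 : ℝ → ℝ := fun y => A + B * ((Real.exp (k * y) - 1 - y * (k * Real.exp (k * y))) /
      (Real.exp (k * y) - 1) ^ 2) with hF1def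
  have hE1 : ∀ y : ℝ, y ∈ Set.Ioi (0:ℝ) → 1 < Real.exp (k * y) := by
    intro y hy
    rw [Set.mem_Ioi] at hy
    exact Real.one_lt_exp_iff.2 (by positivity)
  have hEne : ∀ y : ℝ, y ∈ Set.Ioi (0:ℝ) → Real.exp (k * y) - 1 ≠ 0 := by
    intro y hy
    exact sub_ne_zero.2 (hE1 y hy).ne'
  have hconv : StrictConvexOn ℝ (Set.Ioi (0:ℝ)) F := by
    apply strictConvexOn_of_deriv2_pos (convex_Ioi 0)
    · apply ContinuousOn.add
      · exact (continuous_const.mul continuous_id).continuousOn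
      · apply ContinuousOn.mul continuousOn_const
        apply ContinuousOn.div continuousOn_id
        · exact ((Real.continuous_exp.comp (continuous_const.mul continuous_id)).sub
            continuous_const).continuousOn
        · exact hEne
    · intro x hx
      rw [interior_Ioi] at hx
      have hxpos : (0:ℝ) < x := hx
      have hd1 : ∀ y ∈ Set.Ioi (0:ℝ), deriv F y = F1 y := by
        intro y hy
        exact (aux_F1 A B k y (hEne y hy)).deriv
      have hEq : deriv F =ᶠ[nhds x] F1 :=
        Filter.eventuallyEq_of_mem (isOpen_Ioi.mem_nhds hx) hd1
      have h2 : deriv (deriv F) x = B * (k * Real.exp (k * x) *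
          ((k * x - 2) * Real.exp (k * x) + k * x + 2) / (Real.exp (k * x) - 1) ^ 3) := by
        rw [hEq.deriv_eq]
        exact (aux_F2 A B k x (hEne x hx)).deriv
      have : (deriv^[2] F) x = deriv (deriv F) x := by
        simp [Function.iterate_succ, Function.iterate_one]
      rw [this, h2]
      have hE := hE1 x hx
      have hphi : 0 < (k * x - 2) * Real.exp (k * x) + k * x + 2 :=
        aux_phi_pos (by positivity)
      have hden : 0 < (Real.exp (k * x) - 1) ^ 3 := pow_pos (sub_pos.2 hE) 3
      exact mul_pos hB (div_pos (mul_pos (mul_pos hk (Real.exp_pos _)) hphi) hden)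
  have heq : Set.EqOn F (fun R : ℝ =>
      R * (1 - pj * (Pmax - Pa / ((2 : ℝ) ^ R - 1) + σb) / (Pmax - Pmin)))
      (Set.Ioi (0:ℝ)) := by
    intro x hx
    have hr : (2:ℝ) ^ x = Real.exp (k * x) := by
      rw [Real.rpow_def_of_pos (by norm_num : (0:ℝ) < 2), hkdef]
    simp only [hFdef, hAdef, hBdef, hr]
    have h1 := hEne x hx
    field_simp
    ring
  exact hconv.congr heq
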